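/- arXiv:1901.01436 — 4 statements merged into one kernel-verified Lean document; each statement's English description precedes it below -/
import Mathlib

section
/- Suppose j, n, m ≥ 3, (n+m-4) ≡ 0 mod (j-1), and j, n, and s = (n+m-4)/(j-1) are all odd. Then in any red/blue edge coloring of the complete multipartite graph K_{j×s}, if no vertex has red degree at least n-1, then some vertex has blue degree at least m-1. Consequently K_{j×s} → (S_n, S_m). -/
/-- The complete balanced multipartite graph `K_{j×s}` on `Fin j × Fin s`:
vertices are adjacent iff they lie in different parts (different first coordinate). -/
def multiK (j s : ℕ) : SimpleGraph (Fin j × Fin s) where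
  Adj u v := u.1 ≠ v.1
  symm := ⟨fun _ _ h => h.symm⟩
  loopless := ⟨fun _ h => h rfl⟩

/-- Degree of a vertex, via `Set.ncard` of its neighbor set. -/
noncomputable def mdeg {V : Type*} (G : SimpleGraph V) (v : V) : ℕ :=
  (G.neighborSet v).ncard

/-- `K_{j×s} → (S_n, S_m)`: every red/blue edge coloring (red subgraph `R ≤ K_{j×s}`,
blue the rest) contains a red `K_{1,n-1}` or a blue `K_{1,m-1}`. -/
def Arrows (j s n m : ℕ) : Prop :=
  ∀ R : SimpleGraph (Fin j × Fin s), R ≤ multiK j s →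
    (∃ v, n - 1 ≤ mdeg R v) ∨ (∃ v, m - 1 ≤ mdeg (multiK j s \ R) v)

/-- The size Ramsey multipartite number `m_j(S_n, S_m)`. -/
noncomputable def mj (j n m : ℕ) : ℕ := sInf {s | Arrows j s n m}

open Finset in
theorem stmt5 (j n m s : ℕ) (hj : 3 ≤ j) (hn : 3 ≤ n) (hm : 3 ≤ m)
    (hdvd : (j - 1) ∣ (n + m - 4)) (hs : s = (n + m - 4) / (j - 1))
    (hjo : Odd j) (hno : Odd n) (hso : Odd s) :
    (∀ R : SimpleGraph (Fin j × Fin s), R ≤ multiK j s →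
      (∀ v, mdeg R v < n - 1) → ∃ v, m - 1 ≤ mdeg (multiK j s \ R) v) ∧
      Arrows j s n m := by
  classical
  have hmul : (j - 1) * s = n + m - 4 := by
    rw [hs, Nat.mul_div_cancel' hdvd]
  have hdegK : ∀ v, mdeg (multiK j s) v = (j - 1) * s := by
    intro v
    have h1 : (multiK j s).neighborSet v
        = ↑((Finset.univ.erase v.1) ×ˢ (Finset.univ : Finset (Fin s))) := by
      ext u
      simp [SimpleGraph.mem_neighborSet, multiK, Finset.mem_product, Finset.mem_erase, ne_comm]
    rw [mdeg, h1, Set.ncard_coe_finset, Finset.card_product,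
      Finset.card_erase_of_mem (mem_univ _), Finset.card_univ, Finset.card_univ,
      Fintype.card_fin, Fintype.card_fin]
  have main : ∀ R : SimpleGraph (Fin j × Fin s), R ≤ multiK j s →
      (∀ v, mdeg R v < n - 1) → ∃ v, m - 1 ≤ mdeg (multiK j s \ R) v := by
    intro R hR hlt
    have key : ∃ v, mdeg R v ≤ n - 3 := by
      by_contra hcon
      push_neg at hcon
      have heq : ∀ v, mdeg R v = n - 2 := by
        intro v
        have h1 := hlt v
        have h2 := hcon v
        omega
      have hsum : ∑ v, mdeg R v = (j * s) * (n - 2) := by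
        rw [Finset.sum_congr rfl (fun v _ => heq v), Finset.sum_const, smul_eq_mul,
          Finset.card_univ, Fintype.card_prod, Fintype.card_fin, Fintype.card_fin]
      have heven : Even (∑ v, mdeg R v) := by
        have h2 : ∑ v, mdeg R v = ∑ v, R.degree v := by
          refine Finset.sum_congr rfl fun v _ => ?_
          rw [mdeg]; conv_lhs => rw [show R.neighborSet v = ↑(R.neighborFinset v) from by
            ext u; simp [SimpleGraph.mem_neighborFinset, SimpleGraph.mem_neighborSet],
            Set.ncard_coe_finset]
          rfl
        rw [h2, SimpleGraph.sum_degrees_eq_twice_card_edges]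
        exact even_two_mul _
      have hodd : Odd ((j * s) * (n - 2)) := by
        obtain ⟨c, hc⟩ := hno
        exact (hjo.mul hso).mul ⟨c - 1, by omega⟩
      rw [hsum, Nat.even_iff] at heven
      rw [Nat.odd_iff] at hodd
      omega
    obtain ⟨v, hv⟩ := key
    refine ⟨v, ?_⟩
    have hsub : R.neighborSet v ⊆ (multiK j s).neighborSet v := fun u hu => hR hu
    have hset : (multiK j s \ R).neighborSet v
        = (multiK j s).neighborSet v \ R.neighborSet v := by
      ext u
      simp [SimpleGraph.mem_neighborSet, SimpleGraph.sdiff_adj]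
    have hblue : mdeg (multiK j s \ R) v = mdeg (multiK j s) v - mdeg R v := by
      rw [mdeg, hset, Set.ncard_diff hsub]
      rfl
    rw [hblue, hdegK v, hmul]
    omega
  refine ⟨main, ?_⟩
  intro R hR
  by_cases h : ∃ v, n - 1 ≤ mdeg R v
  · exact Or.inl h
  · push_neg at h
    exact Or.inr (main R hR h)
end

section
/- Let j ≥ 3 and s ≥ 1 with j even. Then for every integer d with 0 ≤ d ≤ (j-1)s - 1 there exists a d-regular spanning subgraph of the complete multipartite graph K_{j×s}. -/
open Finset

variable {G : Type*} [AddCommGroup G] [DecidableEq G]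

/-- From a symmetric set with no involutions, extract a symmetric subset of any even size. -/
lemma pairs_subset (q : ℕ) : ∀ (P : Finset G), (∀ x ∈ P, -x ∈ P) → (∀ x ∈ P, -x ≠ x) →
    2 * q ≤ P.card → ∃ S ⊆ P, (∀ x ∈ S, -x ∈ S) ∧ S.card = 2 * q := by
  induction q with
  | zero => intro P _ _ _; exact ⟨∅, empty_subset _, by simp, by simp⟩
  | succ q ih =>
    intro P hsym hni hq
    have hP : P.Nonempty := by
      rw [← Finset.card_pos]; omega
    obtain ⟨x, hx⟩ := hP
    have hnx : -x ∈ P := hsym x hx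
    have hne : -x ≠ x := hni x hx
    set P' := (P.erase x).erase (-x) with hP'
    have hsub : P' ⊆ P := (erase_subset _ _).trans (erase_subset _ _)
    have hmem : ∀ y, y ∈ P' ↔ y ∈ P ∧ y ≠ x ∧ y ≠ -x := by
      intro y
      simp [hP', Finset.mem_erase]
      tauto
    have hcard : P'.card = P.card - 2 := by
      rw [hP', card_erase_of_mem, card_erase_of_mem hx]
      · omega
      · rw [mem_erase]; exact ⟨hne, hnx⟩
    obtain ⟨S', hS'sub, hS'sym, hS'card⟩ := ih P'
      (fun y hy => by
        rw [hmem] at hy ⊢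
        refine ⟨hsym y hy.1, ?_, ?_⟩
        · intro h; exact hy.2.2 (by rw [← h, neg_neg])
        · intro h; exact hy.2.1 (neg_injective h))
      (fun y hy => hni y (hsub hy))
      (by omega)
    refine ⟨insert x (insert (-x) S'), ?_, ?_, ?_⟩
    · intro y hy
      rcases Finset.mem_insert.mp hy with h | hy
      · exact h ▸ hx
      rcases Finset.mem_insert.mp hy with h | hy
      · exact h ▸ hnx
      · exact hsub (hS'sub hy)
    · intro y hy
      rcases Finset.mem_insert.mp hy with h | hy
      · subst h; exact Finset.mem_insert_of_mem (Finset.mem_insert_self _ _)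
      rcases Finset.mem_insert.mp hy with h | hy
      · subst h; rw [neg_neg]; exact Finset.mem_insert_self _ _
      · exact Finset.mem_insert_of_mem (Finset.mem_insert_of_mem (hS'sym y hy))
    · have hxS' : x ∉ S' := fun h => ((hmem x).mp (hS'sub h)).2.1 rfl
      have hnxS' : -x ∉ S' := fun h => ((hmem (-x)).mp (hS'sub h)).2.2 rfl
      rw [Finset.card_insert_of_notMem, Finset.card_insert_of_notMem hnxS', hS'card]
      · ring
      · simp only [Finset.mem_insert]
        push_neg
        exact ⟨fun h => hne h.symm, hxS'⟩

/-- A symmetric set with no involutions has even cardinality. -/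
lemma pairs_even_aux (n : ℕ) : ∀ (P : Finset G), P.card = n → (∀ x ∈ P, -x ∈ P) → (∀ x ∈ P, -x ≠ x) → Even n := by
  induction n using Nat.strong_induction_on with
  | _ n ih =>
    intro P hn hsym hni
    rcases Finset.eq_empty_or_nonempty P with h | ⟨x, hx⟩
    · simp [h] at hn; simp [← hn]
    have hnx : -x ∈ P := hsym x hx
    have hne : -x ≠ x := hni x hx
    set P' := (P.erase x).erase (-x) with hP'
    have hsub : P' ⊆ P := (erase_subset _ _).trans (erase_subset _ _)
    have hmem : ∀ y, y ∈ P' ↔ y ∈ P ∧ y ≠ x ∧ y ≠ -x := by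
      intro y; simp [hP', Finset.mem_erase]; tauto
    have hcard : P'.card = P.card - 2 := by
      rw [hP', card_erase_of_mem, card_erase_of_mem hx]
      · omega
      · rw [mem_erase]; exact ⟨hne, hnx⟩
    have hpos : 2 ≤ P.card := by
      have : ({-x, x} : Finset G) ⊆ P := by
        intro y hy; rcases Finset.mem_insert.mp hy with h | h
        · exact h ▸ hnx
        · simp at h; exact h ▸ hx
      have := Finset.card_le_card this
      rwa [Finset.card_insert_of_notMem (by simp [hne]), Finset.card_singleton] at this
    have hev := ih P'.card (by omega) P' rfl
      (fun y hy => by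
        rw [hmem] at hy ⊢
        refine ⟨hsym y hy.1, fun h => hy.2.2 (by rw [← h, neg_neg]), fun h => hy.2.1 (neg_injective h)⟩)
      (fun y hy => hni y (hsub hy))
    rw [hcard] at hev
    rcases hev with ⟨k, hk⟩
    exact ⟨k + 1, by omega⟩

lemma pairs_even (P : Finset G) (h1 : ∀ x ∈ P, -x ∈ P) (h2 : ∀ x ∈ P, -x ≠ x) : Even P.card :=
  pairs_even_aux P.card P rfl h1 h2

/-- Main combinatorial lemma: a symmetric set containing an involution has symmetric
subsets of every size. -/
lemma symm_subset (A : Finset G) (hsym : ∀ x ∈ A, -x ∈ A)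
    (e : G) (he : e ∈ A) (hee : -e = e)
    (d : ℕ) (hd : d ≤ A.card) : ∃ S ⊆ A, (∀ x ∈ S, -x ∈ S) ∧ S.card = d := by
  classical
  set I := A.filter (fun x => -x = x) with hI
  set P := A.filter (fun x => -x ≠ x) with hP
  have hIP : I.card + P.card = A.card := Finset.card_filter_add_card_filter_not _
  have hPsym : ∀ x ∈ P, -x ∈ P := by
    intro x hx; rw [hP, Finset.mem_filter] at hx ⊢
    exact ⟨hsym x hx.1, fun h => hx.2 (by rw [neg_neg] at h; exact h.symm)⟩
  have hPni : ∀ x ∈ P, -x ≠ x := fun x hx => (Finset.mem_filter.mp hx).2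
  have hPev : Even P.card := pairs_even P hPsym hPni
  have hIe : e ∈ I := Finset.mem_filter.mpr ⟨he, hee⟩
  have hI1 : 1 ≤ I.card := Finset.card_pos.mpr ⟨e, hIe⟩
  set q := min (d / 2) (P.card / 2) with hq
  have h2q : 2 * q ≤ P.card := by
    have : 2 * (P.card / 2) ≤ P.card := Nat.mul_div_le _ _
    omega
  have h2qd : 2 * q ≤ d := by
    have : 2 * (d / 2) ≤ d := Nat.mul_div_le _ _
    omega
  set i := d - 2 * q with hi
  have hiI : i ≤ I.card := by
    rcases hPev with ⟨k, hk⟩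
    have hP2 : P.card / 2 = k := by omega
    rcases Nat.le_total (d / 2) (P.card / 2) with h | h
    · have : q = d / 2 := by omega
      have : i ≤ 1 := by omega
      omega
    · have : q = P.card / 2 := by omega
      omega
  obtain ⟨I', hI'sub, hI'card⟩ := Finset.exists_subset_card_eq hiI
  obtain ⟨SP, hSPsub, hSPsym, hSPcard⟩ := pairs_subset q P hPsym hPni h2q
  refine ⟨I' ∪ SP, ?_, ?_, ?_⟩
  · intro x hx
    rcases Finset.mem_union.mp hx with h | h
    · exact (Finset.mem_filter.mp (hI'sub h)).1
    · exact (Finset.mem_filter.mp (hSPsub h)).1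
  · intro x hx
    rcases Finset.mem_union.mp hx with h | h
    · rw [(Finset.mem_filter.mp (hI'sub h)).2]; exact Finset.mem_union_left _ h
    · exact Finset.mem_union_right _ (hSPsym x h)
  · rw [Finset.card_union_of_disjoint, hI'card, hSPcard]
    · omega
    · refine Finset.disjoint_left.mpr fun x hx hx' => ?_
      exact (Finset.mem_filter.mp (hSPsub hx')).2 (Finset.mem_filter.mp (hI'sub hx)).2

theorem stmt7 (j s d : ℕ) (hj : 3 ≤ j) (hs : 1 ≤ s)
    (hje : Even j) (hdle : d ≤ (j - 1) * s - 1) :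
    ∃ H : SimpleGraph (Fin j × Fin s), H ≤ multiK j s ∧ ∀ v, mdeg H v = d := by
  haveI : NeZero j := ⟨by omega⟩
  haveI : NeZero s := ⟨by omega⟩
  classical
  -- the ambient symmetric connection set
  set A : Finset (Fin j × Fin s) := (Finset.univ.erase (0 : Fin j)) ×ˢ Finset.univ with hA
  have hmemA : ∀ x : Fin j × Fin s, x ∈ A ↔ x.1 ≠ 0 := by
    intro x
    simp [hA, Finset.mem_product]
  have hAsym : ∀ x ∈ A, -x ∈ A := by
    intro x hx
    rw [hmemA] at hx ⊢
    show -x.1 ≠ 0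
    exact neg_ne_zero.mpr hx
  have hAcard : A.card = (j - 1) * s := by
    rw [hA, Finset.card_product, Finset.card_erase_of_mem (Finset.mem_univ _)]
    simp
  -- the involution
  obtain ⟨k, hk⟩ := hje
  have hk2 : j / 2 < j := by omega
  set e : Fin j × Fin s := (⟨j / 2, hk2⟩, 0) with he
  have hee : -e = e := by
    have h1 : -(⟨j / 2, hk2⟩ : Fin j) = ⟨j / 2, hk2⟩ := by
      rw [neg_eq_iff_add_eq_zero]
      apply Fin.ext
      rw [Fin.val_add, Fin.val_zero]
      show (j / 2 + j / 2) % j = 0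
      have : j / 2 + j / 2 = j := by omega
      rw [this, Nat.mod_self]
    rw [he, Prod.neg_mk, h1, neg_zero]
  have heA : e ∈ A := by
    rw [hmemA]
    show (⟨j / 2, hk2⟩ : Fin j) ≠ 0
    intro h
    have := congrArg Fin.val h
    simp [Fin.val_zero] at this
    omega
  have hdA : d ≤ A.card := by
    rw [hAcard]
    have : 2 ≤ (j - 1) * s := le_trans (by omega) (Nat.mul_le_mul (by omega : 2 ≤ j - 1) hs)
    omega
  obtain ⟨S, hSsub, hSsym, hScard⟩ := symm_subset A hAsym e heA hee d hdA
  -- the Cayley graph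
  let H : SimpleGraph (Fin j × Fin s) :=
    { Adj := fun u v => v - u ∈ S
      symm := by
        refine ⟨fun u v (h : v - u ∈ S) => (?_ : u - v ∈ S)⟩
        have h2 : u - v = -(v - u) := (neg_sub v u).symm
        rw [h2]
        exact hSsym _ h
      loopless := by
        refine ⟨fun v (h : v - v ∈ S) => ?_⟩
        simp only [sub_self] at h
        have := (hmemA 0).mp (hSsub h)
        exact this rfl }
  have hHadj : ∀ u v, H.Adj u v ↔ v - u ∈ S := fun u v => Iff.rfl
  refine ⟨H, ?_, ?_⟩
  · intro u v h
    rw [hHadj] at h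
    have h1 : (v - u).1 ≠ 0 := (hmemA _).mp (hSsub h)
    have : v.1 - u.1 ≠ 0 := h1
    exact (sub_ne_zero.mp this).symm
  · intro v
    have hset : H.neighborSet v = (fun x => x + v) '' ↑S := by
      ext w
      simp only [SimpleGraph.mem_neighborSet, Set.mem_image, Finset.mem_coe, hHadj]
      constructor
      · intro h
        exact ⟨w - v, h, by simp⟩
      · rintro ⟨x, hx, rfl⟩
        simpa using hx
    rw [mdeg, hset, Set.ncard_image_of_injective _ (add_left_injective v),
      Set.ncard_coe_finset, hScard]
end

section
/- Let j ≥ 3 be odd and s ≥ 2 even. Then for every integer d with 0 ≤ d ≤ (j-1)s - 1 there exists a d-regular spanning subgraph of the complete multipartite graph K_{j×s}. -/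
lemma exists_half {α : Type*} [DecidableEq α] (f : α → α) (hinv : ∀ a, f (f a) = a) :
    ∀ A : Finset α, (∀ a ∈ A, f a ∈ A) → (∀ a ∈ A, f a ≠ a) →
    ∃ P : Finset α, P ⊆ A ∧ (∀ a ∈ P, f a ∉ P) ∧ (∀ a ∈ A, a ∈ P ∨ f a ∈ P) := by
  intro A
  induction A using Finset.strongInduction with
  | _ A ih =>
    intro hmem hfp
    rcases A.eq_empty_or_nonempty with rfl | ⟨a, ha⟩
    · exact ⟨∅, by simp⟩
    · have hfa : f a ∈ A := hmem a ha
      have hinj : ∀ x y, f x = f y → x = y := fun x y h => by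
        rw [← hinv x, h, hinv]
      have hss : A \ {a, f a} ⊂ A := by
        refine Finset.sdiff_ssubset (by simp [Finset.insert_subset_iff, ha, hfa]) (Finset.insert_nonempty _ _)
      obtain ⟨P, hPA, hPf, hcov⟩ := ih _ hss
        (by
          intro x hx
          simp only [Finset.mem_sdiff, Finset.mem_insert, Finset.mem_singleton] at hx ⊢
          push_neg at hx ⊢
          refine ⟨hmem x hx.1, ?_, ?_⟩
          · intro h; exact hx.2.2 (hinj _ _ (h.trans (hinv a).symm))
          · intro h; exact hx.2.1 (hinj _ _ h))
        (fun x hx => hfp x (Finset.mem_sdiff.mp hx).1)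
      have hPA' : P ⊆ A := hPA.trans Finset.sdiff_subset
      have hnotP : ∀ x ∈ P, x ≠ a ∧ x ≠ f a := by
        intro x hx
        have := hPA hx
        simp only [Finset.mem_sdiff, Finset.mem_insert, Finset.mem_singleton] at this
        push_neg at this
        exact this.2
      have hfaP : f a ∉ P := fun h => (hnotP _ h).2 rfl
      refine ⟨insert a P, Finset.insert_subset ha hPA', ?_, ?_⟩
      · intro x hx
        rcases Finset.mem_insert.mp hx with rfl | hx
        · simp only [Finset.mem_insert]
          push_neg
          exact ⟨hfp x ha, hfaP⟩
        · simp only [Finset.mem_insert]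
          push_neg
          constructor
          · intro h
            exact (hnotP x hx).2 (hinj _ _ (h.trans (hinv a).symm))
          · exact hPf x hx
      · intro x hx
        by_cases h1 : x = a
        · exact Or.inl (by simp [h1])
        by_cases h2 : x = f a
        · right
          rw [h2, hinv]
          simp
        · have : x ∈ A \ {a, f a} := by simp [hx, h1, h2]
          rcases hcov x this with h | h
          · exact Or.inl (Finset.mem_insert_of_mem h)
          · exact Or.inr (Finset.mem_insert_of_mem h)


theorem stmt8 (j s d : ℕ) (hj : 3 ≤ j) (hjo : Odd j)
    (hs : 2 ≤ s) (hse : Even s) (hdle : d ≤ (j - 1) * s - 1) :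
    ∃ H : SimpleGraph (Fin j × Fin s), H ≤ multiK j s ∧ ∀ v, mdeg H v = d := by
  classical
  haveI : NeZero j := ⟨by omega⟩
  haveI : NeZero s := ⟨by omega⟩
  -- basic Fin j facts
  have hone : (1 : Fin j) ≠ 0 := by
    intro h
    have := congrArg Fin.val h
    rw [Fin.val_one', Fin.val_zero, Nat.mod_eq_of_lt (by omega)] at this
    omega
  have hdbl : ∀ x : Fin j, x + x = 0 → x = 0 := by
    intro x h
    have hv := congrArg Fin.val h
    rw [Fin.add_def] at hv
    simp at hv
    have hd : j ∣ x.val + x.val := Nat.dvd_of_mod_eq_zero hv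
    have hjx : j ∣ x.val :=
      Nat.Coprime.dvd_of_dvd_mul_left hjo.coprime_two_right (by rwa [← two_mul] at hd)
    have hx := x.isLt
    have hz : x.val = 0 := by
      rcases Nat.eq_zero_or_pos x.val with h' | h'
      · exact h'
      · exact absurd (Nat.le_of_dvd h' hjx) (by omega)
    exact Fin.ext (by simp [hz])
  -- second coordinate stepping
  have hstep1 : ∀ b : Fin s, Even b.val → (b + 1).val = b.val + 1 := by
    intro b hb
    rw [Fin.add_def]
    simp only [Fin.val_one']
    obtain ⟨c, hc⟩ := hse
    obtain ⟨e, he⟩ := hb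
    have := b.isLt
    rw [Nat.mod_eq_of_lt (show 1 < s by omega), Nat.mod_eq_of_lt (by omega)]
  have hstep2 : ∀ b : Fin s, ¬ Even b.val → (b - 1).val = b.val - 1 := by
    intro b hb
    rw [Fin.sub_def]
    simp only [Fin.val_one']
    have := b.isLt
    have hb1 : 1 ≤ b.val := by
      rcases Nat.eq_zero_or_pos b.val with h | h
      · simp [h] at hb
      · omega
    rw [Nat.mod_eq_of_lt (show 1 < s by omega)]
    rw [show s - 1 + b.val = s + (b.val - 1) by omega, Nat.add_mod_left,
      Nat.mod_eq_of_lt (by omega)]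
  set e : Fin j × Fin s := (1, 1) with he
  have he1 : e.1 = (1 : Fin j) := rfl
  have hene : e ≠ -e := by
    intro h
    have h1 : (1 : Fin j) = -1 := congrArg Prod.fst h
    exact hone (hdbl 1 (by rw [eq_neg_iff_add_eq_zero] at h1; exact h1))
  -- the involution σ
  set σ : Fin j × Fin s → Fin j × Fin s :=
    fun v => if Even (v.2 : ℕ) then v + e else v - e with hσ
  have hσσ : ∀ v, σ (σ v) = v := by
    intro v
    by_cases hv : Even (v.2 : ℕ)
    · have h2 : ((v + e).2 : ℕ) = v.2.val + 1 := hstep1 _ hv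
      have : ¬ Even ((v + e).2 : ℕ) := by rw [h2]; simp [Nat.even_add_one, hv]
      simp only [hσ, if_pos hv, if_neg this]
      abel
    · have h2 : ((v - e).2 : ℕ) = v.2.val - 1 := hstep2 _ hv
      have hb1 : 1 ≤ v.2.val := by
        rcases Nat.eq_zero_or_pos v.2.val with h | h
        · simp [h] at hv
        · omega
      have : Even ((v - e).2 : ℕ) := by
        rw [h2]
        rcases Nat.even_or_odd v.2.val with h | h
        · exact absurd h hv
        · obtain ⟨c, hc⟩ := h; exact ⟨c, by omega⟩
      simp only [hσ, if_neg hv, if_pos this]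
      abel
  have hσfst : ∀ v, (σ v).1 ≠ v.1 := by
    intro v
    by_cases hv : Even (v.2 : ℕ) <;> simp only [hσ, if_pos, if_neg, hv, if_true, if_false]
    · show (v + e).1 ≠ v.1
      rw [Prod.fst_add, he1]
      intro h
      exact hone (by rwa [add_eq_left] at h)
    · show (v - e).1 ≠ v.1
      rw [Prod.fst_sub, he1]
      intro h
      exact hone (by rwa [sub_eq_self] at h)
  have hσne : ∀ v, σ v ≠ v := fun v h => hσfst v (congrArg Prod.fst h)
  have hσsub : ∀ v, σ v - v = e ∨ σ v - v = -e := by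
    intro v
    by_cases hv : Even (v.2 : ℕ)
    · left; simp only [hσ, if_pos hv]; abel
    · right; simp only [hσ, if_neg hv]; abel
  -- the ground set A
  set A : Finset (Fin j × Fin s) :=
    Finset.univ.filter (fun x => x.1 ≠ 0 ∧ x ≠ e ∧ x ≠ -e) with hA
  have hmemA : ∀ x, x ∈ A ↔ (x.1 ≠ 0 ∧ x ≠ e ∧ x ≠ -e) := by
    intro x; simp [hA]
  -- cardinality bound
  have hcardA : (j - 1) * s - 2 ≤ A.card := by
    set B : Finset (Fin j × Fin s) := Finset.univ.filter (fun x => x.1 ≠ 0) with hB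
    have hBcard : B.card = (j - 1) * s := by
      have hBeq : B = (Finset.univ.filter (fun a : Fin j => a ≠ 0)) ×ˢ Finset.univ := by
        ext x
        simp [hB, Finset.mem_product]
      rw [hBeq, Finset.card_product, Finset.filter_ne', Finset.card_erase_of_mem (by simp)]
      simp [Nat.sub_mul]
    have hAeq : A = B \ {e, -e} := by
      ext x
      simp only [hmemA, hB, Finset.mem_sdiff, Finset.mem_filter, Finset.mem_univ, true_and,
        Finset.mem_insert, Finset.mem_singleton]
      tauto
    rw [hAeq]
    calc (j - 1) * s - 2 ≤ B.card - ({e, -e} : Finset _).card := by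
          have : ({e, -e} : Finset (Fin j × Fin s)).card ≤ 2 := Finset.card_insert_le _ _ |>.trans (by simp)
          omega
      _ ≤ (B \ {e, -e}).card := Finset.le_card_sdiff _ _
  -- closure of A under negation
  have hAneg : ∀ a ∈ A, -a ∈ A := by
    intro a ha
    rw [hmemA] at ha ⊢
    refine ⟨by rw [Prod.fst_neg]; exact neg_ne_zero.mpr ha.1, ?_, ?_⟩
    · intro h; exact ha.2.2 (by rw [← neg_neg a, h])
    · intro h; exact ha.2.1 (by rw [← neg_neg a, h, neg_neg])
  have hAfp : ∀ a ∈ A, -a ≠ a := by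
    intro a ha h
    rw [hmemA] at ha
    apply ha.1
    have h2 : -a.1 + a.1 = a.1 + a.1 := by
      have := congrArg Prod.fst h
      rw [Prod.fst_neg] at this
      rw [this]
    rw [neg_add_cancel] at h2
    exact hdbl _ h2.symm
  obtain ⟨P, hPA, hPf, hcov⟩ := exists_half (fun x => -x) (fun a => neg_neg a) A hAneg hAfp
  -- |A| = 2 |P|
  have hA2P : A.card = 2 * P.card := by
    have hAeq : A = P ∪ P.image (fun x => -x) := by
      ext x
      simp only [Finset.mem_union, Finset.mem_image]
      constructor
      · intro hx
        rcases hcov x hx with h | h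
        · exact Or.inl h
        · exact Or.inr ⟨-x, h, neg_neg x⟩
      · rintro (h | ⟨y, hy, rfl⟩)
        · exact hPA h
        · exact hAneg y (hPA hy)
    have hdisj : Disjoint P (P.image (fun x => -x)) := by
      rw [Finset.disjoint_left]
      rintro x hx hx2
      obtain ⟨y, hy, hyx⟩ := Finset.mem_image.mp hx2
      exact hPf y hy (by rw [hyx]; exact hx)
    rw [hAeq, Finset.card_union_of_disjoint hdisj,
      Finset.card_image_of_injective _ neg_injective]
    omega
  -- arithmetic: d/2 ≤ |P|
  have hM4 : 4 ≤ (j - 1) * s := by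
    have := Nat.mul_le_mul (show 2 ≤ j - 1 by omega) hs
    omega
  have hMev : ∃ c0, (j - 1) * s = c0 + c0 := by
    obtain ⟨c, hc⟩ := hse
    exact ⟨(j - 1) * c, by rw [hc]; ring⟩
  have htP : d / 2 ≤ P.card := by
    obtain ⟨c0, hc0⟩ := hMev
    omega
  obtain ⟨P', hP'P, hP'card⟩ := Finset.exists_subset_card_eq htP
  -- the symmetric connection set T
  set T : Finset (Fin j × Fin s) := P' ∪ P'.image (fun x => -x) with hT
  have hTA : ∀ x ∈ T, x ∈ A := by
    intro x hx
    rcases Finset.mem_union.mp hx with h | h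
    · exact hPA (hP'P h)
    · obtain ⟨y, hy, rfl⟩ := Finset.mem_image.mp h
      exact hAneg y (hPA (hP'P hy))
  have hTcard : T.card = 2 * (d / 2) := by
    have hdisj : Disjoint P' (P'.image (fun x => -x)) := by
      rw [Finset.disjoint_left]
      rintro x hx hx2
      obtain ⟨y, hy, hyx⟩ := Finset.mem_image.mp hx2
      exact hPf y (hP'P hy) (by rw [hyx]; exact hP'P hx)
    rw [hT, Finset.card_union_of_disjoint hdisj,
      Finset.card_image_of_injective _ neg_injective, hP'card]
    omega
  have hTsym : ∀ x ∈ T, -x ∈ T := by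
    intro x hx
    rcases Finset.mem_union.mp hx with h | h
    · exact Finset.mem_union_right _ (Finset.mem_image_of_mem _ h)
    · obtain ⟨y, hy, rfl⟩ := Finset.mem_image.mp h
      rw [neg_neg]
      exact Finset.mem_union_left _ hy
  have h0T : (0 : Fin j × Fin s) ∉ T := by
    intro h
    exact ((hmemA 0).mp (hTA 0 h)).1 rfl
  have heT : e ∉ T := fun h => ((hmemA e).mp (hTA e h)).2.1 rfl
  have hneT : -e ∉ T := fun h => ((hmemA (-e)).mp (hTA (-e) h)).2.2 rfl
  -- the graph H
  have hsym : Symmetric (fun u v : Fin j × Fin s => v - u ∈ T ∨ (¬ Even d ∧ v = σ u)) := by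
    rintro u v (h | ⟨hd, rfl⟩)
    · left
      have := hTsym _ h
      rwa [neg_sub] at this
    · exact Or.inr ⟨hd, (hσσ u).symm⟩
  have hirr : Irreflexive (fun u v : Fin j × Fin s => v - u ∈ T ∨ (¬ Even d ∧ v = σ u)) := by
    rintro v (h | ⟨hd, h⟩)
    · rw [sub_self] at h; exact h0T h
    · exact hσne v h.symm
  refine ⟨⟨fun u v => v - u ∈ T ∨ (¬ Even d ∧ v = σ u), ⟨@hsym⟩, ⟨@hirr⟩⟩, ?_, ?_⟩
  · -- H ≤ multiK
    rintro u v (h | ⟨hd, rfl⟩)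
    · have h1 := ((hmemA _).mp (hTA _ h)).1
      rw [Prod.fst_sub] at h1
      exact (sub_ne_zero.mp h1).symm
    · exact (hσfst u).symm
  · -- degrees
    intro v
    have hns : (SimpleGraph.mk (fun u v : Fin j × Fin s => v - u ∈ T ∨ (¬ Even d ∧ v = σ u))
        ⟨@hsym⟩ ⟨@hirr⟩).neighborSet v = {w | w - v ∈ T ∨ (¬ Even d ∧ w = σ v)} := rfl
    have himg : {w | w - v ∈ T} = (fun t => v + t) '' (T : Set (Fin j × Fin s)) := by
      ext w
      simp only [Set.mem_setOf_eq, Set.mem_image, Finset.mem_coe]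
      constructor
      · intro h
        exact ⟨w - v, h, by abel⟩
      · rintro ⟨t, ht, rfl⟩
        rwa [add_sub_cancel_left]
    have himgcard : ((fun t => v + t) '' (T : Set (Fin j × Fin s))).ncard = T.card := by
      rw [Set.ncard_image_of_injective _ (add_right_injective v), Set.ncard_coe_finset]
    by_cases hd : Even d
    · have hset : {w : Fin j × Fin s | w - v ∈ T ∨ (¬ Even d ∧ w = σ v)} =
          (fun t => v + t) '' (T : Set (Fin j × Fin s)) := by
        rw [← himg]
        ext w
        simp [hd]
      rw [mdeg, hns, hset, himgcard, hTcard]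
      obtain ⟨c, hc⟩ := hd
      omega
    · have hset : {w : Fin j × Fin s | w - v ∈ T ∨ (¬ Even d ∧ w = σ v)} =
          (fun t => v + t) '' (T : Set (Fin j × Fin s)) ∪ {σ v} := by
        ext w
        simp only [Set.mem_setOf_eq, Set.mem_union, Set.mem_image, Finset.mem_coe,
          Set.mem_singleton_iff, hd, not_false_iff, true_and]
        constructor
        · rintro (h | h)
          · exact Or.inl ⟨w - v, h, by abel⟩
          · exact Or.inr h
        · rintro (⟨x, hx, rfl⟩ | h)
          · exact Or.inl (by rwa [add_sub_cancel_left])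
          · exact Or.inr h
      have hdisj : Disjoint ((fun t => v + t) '' (T : Set (Fin j × Fin s))) {σ v} := by
        rw [Set.disjoint_singleton_right]
        rintro ⟨t, ht, hteq⟩
        have h2 : σ v - v = t := by rw [← hteq]; exact add_sub_cancel_left v t
        rcases hσsub v with h | h <;> rw [h2] at h <;> subst h
        · exact heT ht
        · exact hneT ht
      rw [mdeg, hns, hset, Set.ncard_union_eq hdisj (Set.toFinite _) (Set.toFinite _),
        himgcard, hTcard, Set.ncard_singleton]
      rw [Nat.not_even_iff_odd] at hd
      obtain ⟨c, hc⟩ := hd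
      omega
end

section
/- Let j, n, m ≥ 3 and suppose (n+m-4) ≡ 0 mod (j-1), with s = (n+m-4)/(j-1), and suppose j is even, or s is even, or n is even. If K_{j×s} admits an (n-2)-regular spanning subgraph, then there is a red/blue coloring of the edges of K_{j×s} (red = the regular subgraph, blue = the rest) containing no red S_n and no blue S_m; hence K_{j×s} ↛ (S_n, S_m) and so m_j(S_n, S_m) ≥ s + 1 = ⌈(n+m-3)/(j-1)⌉. -/
lemma mdeg_multiK (j s : ℕ) (v : Fin j × Fin s) : mdeg (multiK j s) v = (j - 1) * s := by
  classical
  have h1 : (multiK j s).neighborSet v = {u : Fin j × Fin s | u.1 = v.1}ᶜ := by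
    ext u; simp [multiK, SimpleGraph.neighborSet, ne_comm]
  have h2 : ({u : Fin j × Fin s | u.1 = v.1}).ncard = s := by
    have : {u : Fin j × Fin s | u.1 = v.1} = (fun b : Fin s => (v.1, b)) '' Set.univ := by
      ext u; constructor
      · rintro h; exact ⟨u.2, trivial, by ext <;> simp [h.symm]⟩
      · rintro ⟨b, -, rfl⟩; rfl
    rw [this, Set.ncard_image_of_injective _ (by intro a b h; simpa using h)]
    simp [Set.ncard_univ]
  have h3 := Set.ncard_add_ncard_compl ({u : Fin j × Fin s | u.1 = v.1})
  have hcard : Nat.card (Fin j × Fin s) = j * s := by simp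
  rw [mdeg, h1]
  have hj : 1 ≤ j ∨ j = 0 := by omega
  have : ({u : Fin j × Fin s | u.1 = v.1}ᶜ).ncard = j * s - s := by omega
  rw [this, Nat.sub_mul, one_mul]

lemma mdeg_sdiff {V : Type*} [Fintype V] {G R : SimpleGraph V} (h : R ≤ G) (v : V) :
    mdeg (G \ R) v = mdeg G v - mdeg R v := by
  classical
  have h1 : (G \ R).neighborSet v = G.neighborSet v \ R.neighborSet v := by
    ext u; simp [SimpleGraph.sdiff_adj, SimpleGraph.neighborSet]
  have h2 : R.neighborSet v ⊆ G.neighborSet v := fun u hu => h hu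
  rw [mdeg, mdeg, mdeg, h1, Set.ncard_diff h2 (Set.toFinite _)]

lemma mdeg_le_of_map {V W : Type*} [Fintype W] (f : V → W) (hf : Function.Injective f)
    (G' : SimpleGraph V) (G : SimpleGraph W)
    (h : ∀ u w, G'.Adj u w → G.Adj (f u) (f w)) (v : V) :
    mdeg G' v ≤ mdeg G (f v) := by
  have him : f '' G'.neighborSet v ⊆ G.neighborSet (f v) := by
    rintro _ ⟨u, hu, rfl⟩; exact h v u hu
  calc mdeg G' v = (f '' G'.neighborSet v).ncard :=
        (Set.ncard_image_of_injective _ hf).symm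
    _ ≤ _ := Set.ncard_le_ncard him (Set.toFinite _)

lemma arrows_mono {j n m t s : ℕ} (hts : t ≤ s) (hA : Arrows j t n m) :
    Arrows j s n m := by
  intro R hR
  set f : Fin j × Fin t → Fin j × Fin s := fun u => (u.1, Fin.castLE hts u.2) with hf
  have hfinj : Function.Injective f := by
    intro a b hab
    simp only [hf, Prod.ext_iff] at hab
    exact Prod.ext hab.1 (Fin.castLE_injective hts hab.2)
  let R' : SimpleGraph (Fin j × Fin t) :=
    { Adj := fun u w => R.Adj (f u) (f w)
      symm := ⟨fun u w h => R.adj_symm h⟩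
      loopless := ⟨fun u h => R.irrefl h⟩ }
  have hR' : R' ≤ multiK j t := by
    intro u w h
    have := hR h
    exact this
  rcases hA R' hR' with ⟨v, hv⟩ | ⟨v, hv⟩
  · left
    exact ⟨f v, le_trans hv (mdeg_le_of_map f hfinj R' R (fun u w h => h) v)⟩
  · right
    refine ⟨f v, le_trans hv (mdeg_le_of_map f hfinj _ _ ?_ v)⟩
    intro u w h
    rcases h with ⟨h1, h2⟩
    exact ⟨h1, h2⟩

lemma arrows_big (j n m : ℕ) (hj : 3 ≤ j) (hn : 3 ≤ n) (hm : 3 ≤ m) :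
    Arrows j (n + m) n m := by
  intro R hR
  by_cases hred : ∃ v, n - 1 ≤ mdeg R v
  · exact Or.inl hred
  · right
    push_neg at hred
    have hv0 : Fin j × Fin (n + m) := ⟨⟨0, by omega⟩, ⟨0, by omega⟩⟩
    refine ⟨hv0, ?_⟩
    have h1 := mdeg_sdiff hR hv0
    have h2 := mdeg_multiK j (n + m) hv0
    have h3 := hred hv0
    have h4 : 2 * (n + m) ≤ (j - 1) * (n + m) :=
      Nat.mul_le_mul_right _ (by omega)
    omega

theorem stmt9 (j n m s : ℕ) (hj : 3 ≤ j) (hn : 3 ≤ n) (hm : 3 ≤ m)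
    (hdvd : (j - 1) ∣ (n + m - 4)) (hs : s = (n + m - 4) / (j - 1))
    (hpar : Even j ∨ Even s ∨ Even n)
    (H : SimpleGraph (Fin j × Fin s)) (hH : H ≤ multiK j s)
    (hreg : ∀ v, mdeg H v = n - 2) :
    (∃ R : SimpleGraph (Fin j × Fin s), R ≤ multiK j s ∧
        (∀ v, mdeg R v ≤ n - 2) ∧ (∀ v, mdeg (multiK j s \ R) v ≤ m - 2)) ∧
      ¬ Arrows j s n m ∧
      s + 1 ≤ mj j n m ∧ s + 1 = (n + m - 3) ⌈/⌉ (j - 1) := by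
  have hj1 : 0 < j - 1 := by omega
  have htot : (j - 1) * s = n + m - 4 := by
    rw [hs]; exact Nat.mul_div_cancel' hdvd
  have hblue : ∀ v, mdeg (multiK j s \ H) v = m - 2 := by
    intro v
    rw [mdeg_sdiff hH v, mdeg_multiK, hreg, htot]
    omega
  have hnA : ¬ Arrows j s n m := by
    intro hA
    rcases hA H hH with ⟨v, hv⟩ | ⟨v, hv⟩
    · have := hreg v; omega
    · have := hblue v; omega
  refine ⟨⟨H, hH, fun v => le_of_eq (hreg v), fun v => le_of_eq (hblue v)⟩, hnA, ?_, ?_⟩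
  · have hmem : (n + m) ∈ {s | Arrows j s n m} := arrows_big j n m hj hn hm
    show s + 1 ≤ sInf {s | Arrows j s n m}
    refine le_csInf ⟨_, hmem⟩ ?_
    intro t ht
    by_contra hc
    exact hnA (arrows_mono (by omega) ht)
  · rw [Nat.ceilDiv_eq_add_pred_div]
    have he : n + m - 3 + (j - 1) - 1 = (n + m - 4) + (j - 1) := by omega
    rw [he, Nat.add_div_right _ hj1, hs]
end
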